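/- A first countable T0 space X is sober if and only if it is well-filtered, if and only if it is an ω-well-filtered d-space. -/

import Mathlib

/-- The specialization order: `x ≤ y` iff `x ∈ cl {y}`. -/
def specLE {X : Type*} [TopologicalSpace X] (x y : X) : Prop := x ∈ closure ({y} : Set X)

/-- A set is saturated iff it is an upper set in the specialization order. -/
def IsSaturatedSet {X : Type*} [TopologicalSpace X] (K : Set X) : Prop :=
  ∀ x y, x ∈ K → specLE x y → y ∈ K

/-- `X` is well-filtered: for every filtered family `𝒦` of nonempty compact saturated sets
and every open `U`, `⋂𝒦 ⊆ U` implies `K ⊆ U` for some `K ∈ 𝒦`. -/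
def WellFiltered (X : Type*) [TopologicalSpace X] : Prop :=
  ∀ 𝒦 : Set (Set X), 𝒦.Nonempty →
    (∀ K ∈ 𝒦, K.Nonempty ∧ IsCompact K ∧ IsSaturatedSet K) →
    (∀ K₁ ∈ 𝒦, ∀ K₂ ∈ 𝒦, ∃ K₃ ∈ 𝒦, K₃ ⊆ K₁ ∩ K₂) →
    ∀ U : Set X, IsOpen U → ⋂₀ 𝒦 ⊆ U → ∃ K ∈ 𝒦, K ⊆ U

/-- `X` is ω-well-filtered: the countable case of well-filteredness. -/
def OmegaWellFiltered (X : Type*) [TopologicalSpace X] : Prop :=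
  ∀ K : ℕ → Set X, (∀ n, (K n).Nonempty ∧ IsCompact (K n) ∧ IsSaturatedSet (K n)) →
    (∀ m n, ∃ k, K k ⊆ K m ∩ K n) →
    ∀ U : Set X, IsOpen U → (⋂ n, K n) ⊆ U → ∃ n, K n ⊆ U

/-- `X` is a d-space: the closure of every directed subset (in the specialization order)
has a generic point. -/
def DSpace (X : Type*) [TopologicalSpace X] : Prop :=
  ∀ D : Set X, D.Nonempty → DirectedOn specLE D → ∃ x, closure D = closure ({x} : Set X)

section Auxiliary

variable {X : Type*} [TopologicalSpace X]

private lemma specLE_refl (x : X) : specLE x x := subset_closure rfl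

private lemma specLE_trans {x y z : X} (h1 : specLE x y) (h2 : specLE y z) : specLE x z :=
  closure_minimal (Set.singleton_subset_iff.2 h2) isClosed_closure h1

private lemma specLE_antisymm [T0Space X] {x y : X} (h1 : specLE x y) (h2 : specLE y x) :
    x = y :=
  ((specializes_iff_mem_closure.2 h2).antisymm (specializes_iff_mem_closure.2 h1)).eq

/-- Open sets are upper sets in the specialization order. -/
private lemma mem_open_of_specLE {U : Set X} (hU : IsOpen U) {x y : X} (hx : x ∈ U)
    (h : specLE x y) : y ∈ U := by
  by_contra hy
  exact (closure_minimal (Set.singleton_subset_iff.2 (Set.mem_compl hy)) hU.isClosed_compl h) hx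

/-- Closed sets are lower sets in the specialization order. -/
private lemma mem_closed_of_specLE {C : Set X} (hC : IsClosed C) {x y : X} (hy : y ∈ C)
    (h : specLE x y) : x ∈ C :=
  closure_minimal (Set.singleton_subset_iff.2 hy) hC h

private lemma upSet_compact (x : X) : IsCompact {y | specLE x y} := by
  apply isCompact_of_finite_subcover
  intro ι U hUo hcov
  obtain ⟨i, hi⟩ := Set.mem_iUnion.1 (hcov (specLE_refl x))
  exact ⟨{i}, fun y hy => Set.mem_biUnion (Finset.mem_singleton_self i)
    (mem_open_of_specLE (hUo i) hi hy)⟩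

private lemma chain_finset_min {c : Set (Set X)} (hchain : IsChain (· ⊆ ·) c) :
    ∀ t : Finset (Set X), ↑t ⊆ c → t.Nonempty → ∃ C ∈ t, ∀ C' ∈ t, C ⊆ C' := by
  classical
  intro t
  induction t using Finset.induction_on with
  | empty => intro _ h; exact absurd h (by simp)
  | @insert a s ha ih =>
    intro hsub hne
    have hac : a ∈ c := hsub (by simp)
    rcases s.eq_empty_or_nonempty with rfl | hs
    · refine ⟨a, by simp, ?_⟩
      intro C' hC'
      simp only [Finset.mem_insert, Finset.notMem_empty, or_false] at hC'
      subst hC'; exact subset_rfl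
    · obtain ⟨C, hC, hmin⟩ := ih (fun z hz => hsub (Finset.mem_insert_of_mem hz)) hs
      have hCc : C ∈ c := hsub (Finset.mem_insert_of_mem hC)
      by_cases heq : a = C
      · subst heq
        refine ⟨a, Finset.mem_insert_self _ _, ?_⟩
        intro C' hC'
        rcases Finset.mem_insert.1 hC' with rfl | h
        · exact subset_rfl
        · exact hmin C' h
      · rcases hchain hac hCc heq with h1 | h2
        · refine ⟨a, Finset.mem_insert_self _ _, ?_⟩
          intro C' hC'
          rcases Finset.mem_insert.1 hC' with rfl | h
          · exact subset_rfl
          · exact h1.trans (hmin C' h)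
        · refine ⟨C, Finset.mem_insert_of_mem hC, ?_⟩
          intro C' hC'
          rcases Finset.mem_insert.1 hC' with rfl | h
          · exact h2
          · exact hmin C' h

/-- Sober implies well-filtered. -/
private lemma sober_to_wf (hs : QuasiSober X) : WellFiltered X := by
  intro 𝒦 h𝒦ne hprops hfil U hU hsub
  by_contra hcon
  push_neg at hcon
  -- the collection of closed subsets of `Uᶜ` meeting every `K ∈ 𝒦`
  set S : Set (Set X) := {C | IsClosed C ∧ C ⊆ Uᶜ ∧ ∀ K ∈ 𝒦, (C ∩ K).Nonempty} with hS
  have hUc : Uᶜ ∈ S := by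
    refine ⟨hU.isClosed_compl, subset_rfl, fun K hK => ?_⟩
    obtain ⟨x, hxK, hxU⟩ := Set.not_subset.1 (hcon K hK)
    exact ⟨x, hxU, hxK⟩
  have hchains : ∀ c ⊆ S, IsChain (· ⊆ ·) c → c.Nonempty → ∃ lb ∈ S, ∀ s ∈ c, lb ⊆ s := by
    intro c hcS hchain hcne
    refine ⟨⋂₀ c, ⟨isClosed_sInter (fun C hC => (hcS hC).1), ?_, ?_⟩,
      fun s hs => Set.sInter_subset_of_mem hs⟩
    · obtain ⟨C0, hC0⟩ := hcne
      exact (Set.sInter_subset_of_mem hC0).trans (hcS hC0).2.1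
    · intro K hK
      by_contra hemp
      rw [Set.not_nonempty_iff_eq_empty] at hemp
      have hKcpt : IsCompact K := (hprops K hK).2.1
      have hcover : K ⊆ ⋃ C : c, (↑C : Set X)ᶜ := by
        intro y hyK
        by_contra hy
        simp only [Set.mem_iUnion, Set.mem_compl_iff, not_exists, not_not] at hy
        have : y ∈ ⋂₀ c ∩ K := ⟨fun C hC => hy ⟨C, hC⟩, hyK⟩
        rw [hemp] at this
        exact this
      obtain ⟨t, ht⟩ := hKcpt.elim_finite_subcover (fun C : c => (↑C : Set X)ᶜ)
        (fun C => ((hcS C.2).1).isOpen_compl) hcover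
      classical
      set t' : Finset (Set X) := t.image Subtype.val with ht'
      have ht'ne : t'.Nonempty := by
        rcases t.eq_empty_or_nonempty with rfl | hne
        · obtain ⟨y, hy⟩ := (hprops K hK).1
          simpa using ht hy
        · exact hne.image _
      have ht'sub : ↑t' ⊆ c := by
        intro s hs
        simp only [ht', Finset.coe_image, Set.mem_image, Finset.mem_coe] at hs
        obtain ⟨C, -, rfl⟩ := hs
        exact C.2
      obtain ⟨Cm, hCmt, hCmmin⟩ := chain_finset_min hchain t' ht'sub ht'ne
      have hKCm : K ⊆ Cmᶜ := by
        intro y hyK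
        obtain ⟨C, hCt, hyC⟩ := Set.mem_iUnion₂.1 (ht hyK)
        have : Cm ⊆ (↑C : Set X) := hCmmin _ (Finset.mem_image_of_mem _ hCt)
        exact fun hyCm => hyC (this hyCm)
      have hCmc : Cm ∈ c := ht'sub hCmt
      obtain ⟨z, hzC, hzK⟩ := (hcS hCmc).2.2 K hK
      exact (hKCm hzK) hzC
  obtain ⟨C, -, hCS, hCmin⟩ := zorn_superset_nonempty S hchains Uᶜ hUc
  obtain ⟨hCcl, hCU, hCK⟩ := hCS
  have hCne : C.Nonempty := by
    obtain ⟨K0, hK0⟩ := h𝒦ne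
    obtain ⟨x, hx, -⟩ := hCK K0 hK0
    exact ⟨x, hx⟩
  have hpre : IsPreirreducible C := by
    rw [isPreirreducible_iff_isClosed_union_isClosed]
    intro F1 F2 h1 h2 hsub2
    by_contra hcc
    push_neg at hcc
    have key : ∀ F : Set X, IsClosed F → ¬C ⊆ F → ∃ K ∈ 𝒦, C ∩ F ∩ K = ∅ := by
      intro F hF hCF
      by_contra hk
      push_neg at hk
      have hmem : C ∩ F ∈ S :=
        ⟨hCcl.inter hF, (Set.inter_subset_left).trans hCU, fun K hK => hk K hK⟩
      have := hCmin hmem Set.inter_subset_left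
      exact hCF (fun x hx => (this hx).2)
    obtain ⟨K1, hK1, he1⟩ := key F1 h1 hcc.1
    obtain ⟨K2, hK2, he2⟩ := key F2 h2 hcc.2
    obtain ⟨K3, hK3, hK3sub⟩ := hfil K1 hK1 K2 hK2
    obtain ⟨x, hxC, hxK3⟩ := hCK K3 hK3
    rcases hsub2 hxC with hx1 | hx2
    · exact absurd (Set.eq_empty_iff_forall_notMem.1 he1 x)
        (by exact fun h => h ⟨⟨hxC, hx1⟩, (hK3sub hxK3).1⟩)
    · exact absurd (Set.eq_empty_iff_forall_notMem.1 he2 x)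
        (by exact fun h => h ⟨⟨hxC, hx2⟩, (hK3sub hxK3).2⟩)
  obtain ⟨x, hx⟩ := hs.sober ⟨hCne, hpre⟩ hCcl
  have hxC : x ∈ C := hx ▸ subset_closure rfl
  have hxK : ∀ K ∈ 𝒦, x ∈ K := by
    intro K hK
    obtain ⟨y, hyC, hyK⟩ := hCK K hK
    have hy : specLE y x := by rw [specLE]; rw [hx]; exact hyC
    exact (hprops K hK).2.2 y x hyK hy
  exact (hCU hxC) (hsub (Set.mem_sInter.2 hxK))

/-- Well-filtered implies ω-well-filtered. -/
private lemma wf_to_omega (h : WellFiltered X) : OmegaWellFiltered X := by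
  intro K hK hdir U hU hsub
  obtain ⟨K', hK'mem, hK'sub⟩ := h (Set.range K) (Set.range_nonempty K)
    (by rintro _ ⟨n, rfl⟩; exact hK n)
    (by
      rintro _ ⟨m, rfl⟩ _ ⟨n, rfl⟩
      obtain ⟨k, hk⟩ := hdir m n
      exact ⟨K k, ⟨k, rfl⟩, hk⟩)
    U hU (by rwa [Set.sInter_range])
  obtain ⟨n, rfl⟩ := hK'mem
  exact ⟨n, hK'sub⟩

/-- Well-filtered implies d-space. -/
private lemma wf_to_dspace (h : WellFiltered X) : DSpace X := by
  intro D hDne hDdir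
  set 𝒦 : Set (Set X) := (fun d => {y | specLE d y}) '' D with h𝒦
  have hcontra : ¬(⋂₀ 𝒦 ⊆ (closure D)ᶜ) := by
    intro hsub
    obtain ⟨K, hKmem, hKsub⟩ := h 𝒦 (hDne.image _)
      (by
        rintro _ ⟨d, hd, rfl⟩
        exact ⟨⟨d, specLE_refl d⟩, upSet_compact d,
          fun x y hx hxy => specLE_trans hx hxy⟩)
      (by
        rintro _ ⟨d1, h1, rfl⟩ _ ⟨d2, h2, rfl⟩
        obtain ⟨d3, h3, h13, h23⟩ := hDdir d1 h1 d2 h2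
        exact ⟨_, ⟨d3, h3, rfl⟩,
          fun y hy => ⟨specLE_trans h13 hy, specLE_trans h23 hy⟩⟩)
      _ isClosed_closure.isOpen_compl hsub
    obtain ⟨d, hd, rfl⟩ := hKmem
    exact hKsub (specLE_refl d) (subset_closure hd)
  obtain ⟨x, hx𝒦, hxcl⟩ := Set.not_subset.1 hcontra
  rw [Set.mem_compl_iff, not_not] at hxcl
  refine ⟨x, subset_antisymm ?_ ?_⟩
  · refine closure_minimal ?_ isClosed_closure
    intro d hd
    exact hx𝒦 _ ⟨d, hd, rfl⟩
  · exact closure_minimal (Set.singleton_subset_iff.2 hxcl) isClosed_closure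

/-- The crux: a first countable T0 ω-well-filtered d-space is sober. -/
private lemma crux [T0Space X] [FirstCountableTopology X]
    (hω : OmegaWellFiltered X) (hd : DSpace X) : QuasiSober X := by
  classical
  -- countable decreasing open neighborhood bases
  have hbase : ∀ x : X, ∃ B : ℕ → Set X, (∀ n, IsOpen (B n)) ∧ (∀ n, x ∈ B n) ∧
      (∀ m n, m ≤ n → B n ⊆ B m) ∧ (∀ U, IsOpen U → x ∈ U → ∃ n, B n ⊆ U) := by
    intro x
    obtain ⟨u, hu⟩ := (nhds x).exists_antitone_basis
    refine ⟨fun n => interior (u n), fun n => isOpen_interior, ?_, ?_, ?_⟩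
    · intro n
      exact mem_interior_iff_mem_nhds.2 (hu.toHasBasis.mem_of_mem trivial)
    · intro m n hmn
      exact interior_mono (hu.antitone hmn)
    · intro U hU hx
      obtain ⟨n, -, hn⟩ := hu.toHasBasis.mem_iff.1 (hU.mem_nhds hx)
      exact ⟨n, fun y hy => hn (interior_subset hy)⟩
  choose B hBopen hBmem hBanti hBbasis using hbase
  -- every point of a closed set has a maximal point above it
  have hmax : ∀ A : Set X, IsClosed A → ∀ a ∈ A,
      ∃ m ∈ A, specLE a m ∧ ∀ z ∈ A, specLE m z → z = m := by
    intro A hA a ha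
    letI : Preorder X :=
      { le := specLE
        le_refl := specLE_refl
        le_trans := fun _ _ _ => specLE_trans }
    have hch : ∀ c ⊆ {z | z ∈ A ∧ specLE a z}, IsChain (· ≤ ·) c → ∀ y ∈ c,
        ∃ ub ∈ {z | z ∈ A ∧ specLE a z}, ∀ z ∈ c, z ≤ ub := by
      intro c hcs hchain y hyc
      have hdir : DirectedOn specLE c := hchain.directedOn
      obtain ⟨x, hx⟩ := hd c ⟨y, hyc⟩ hdir
      have hxc : x ∈ closure c := by rw [hx]; exact subset_closure rfl
      have hcx : ∀ z ∈ c, specLE z x := by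
        intro z hz
        have : z ∈ closure ({x} : Set X) := by rw [← hx]; exact subset_closure hz
        exact this
      refine ⟨x, ⟨?_, ?_⟩, hcx⟩
      · exact closure_minimal (fun z hz => (hcs hz).1) hA hxc
      · exact specLE_trans (hcs hyc).2 (hcx y hyc)
    obtain ⟨m, ham, hmS, hmub⟩ := zorn_le_nonempty₀ {z | z ∈ A ∧ specLE a z} hch a
      ⟨ha, specLE_refl a⟩
    refine ⟨m, hmS.1, ham, ?_⟩
    intro z hz hmz
    have hzS : z ∈ {z | z ∈ A ∧ specLE a z} := ⟨hz, specLE_trans hmS.2 hmz⟩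
    exact specLE_antisymm (hmub hzS hmz) hmz
  -- uniqueness of maximal points in an irreducible closed set
  have huniq : ∀ A : Set X, IsIrreducible A → IsClosed A →
      ∀ b ∈ A, ∀ M ∈ A, (∀ z ∈ A, specLE b z → z = b) →
      (∀ z ∈ A, specLE M z → z = M) → b = M := by
    intro A hirr hcl b hb M hM hbmax hMmax
    by_contra hbM
    -- finite intersections of basic neighborhoods of points of A
    set I : List X → ℕ → Set X := fun l n => {y | ∀ x ∈ l, y ∈ B x n} with hI
    have hIopen : ∀ l n, IsOpen (I l n) := by
      intro l n
      induction l with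
      | nil =>
        have : I [] n = Set.univ := by ext y; simp [hI]
        rw [this]; exact isOpen_univ
      | cons x l ih =>
        have : I (x :: l) n = B x n ∩ I l n := by
          ext y; simp [hI, List.forall_mem_cons]
        rw [this]; exact (hBopen x n).inter ih
    have hINe : ∀ l : List X, (∀ x ∈ l, x ∈ A) → ∀ n, (A ∩ I l n).Nonempty := by
      intro l
      induction l with
      | nil =>
        intro _ n
        have : I [] n = Set.univ := by ext y; simp [hI]
        rw [this, Set.inter_univ]
        exact hirr.nonempty
      | cons x l ih =>
        intro hl n
        have hxA : x ∈ A := hl x List.mem_cons_self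
        have hx : (A ∩ B x n).Nonempty := ⟨x, hxA, hBmem x n⟩
        have hrec := ih (fun z hz => hl z (List.mem_cons_of_mem _ hz)) n
        have hres := hirr.2 (B x n) (I l n) (hBopen x n) (hIopen l n) hx hrec
        have : I (x :: l) n = B x n ∩ I l n := by
          ext y; simp [hI, List.forall_mem_cons]
        rw [this]
        exact hres
    set Dset : List X → ℕ → Set X := fun l n => B b n ∩ B M n ∩ I l n with hDset
    have hDNe : ∀ l : List X, (∀ x ∈ l, x ∈ A) → ∀ n, (A ∩ Dset l n).Nonempty := by
      intro l hl n
      have h1 : (A ∩ (B b n ∩ B M n)).Nonempty :=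
        hirr.2 (B b n) (B M n) (hBopen b n) (hBopen M n)
          ⟨b, hb, hBmem b n⟩ ⟨M, hM, hBmem M n⟩
      exact hirr.2 (B b n ∩ B M n) (I l n) ((hBopen b n).inter (hBopen M n))
        (hIopen l n) h1 (hINe l hl n)
    set pick : List X → ℕ → X := fun l n =>
      if h : (A ∩ Dset l n).Nonempty then h.choose else b with hpickdef
    have hpick : ∀ l n, (∀ x ∈ l, x ∈ A) → pick l n ∈ A ∩ Dset l n := by
      intro l n hl
      have h := hDNe l hl n
      simp only [hpickdef, dif_pos h]
      exact h.choose_spec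
    set ws : ℕ → List X := fun n => Nat.rec [] (fun k acc => acc ++ [pick acc k]) n with hws
    have hws_succ : ∀ n, ws (n + 1) = ws n ++ [pick (ws n) n] := fun n => rfl
    set w : ℕ → X := fun n => pick (ws n) n with hw
    have hwsA : ∀ n, ∀ x ∈ ws n, x ∈ A := by
      intro n
      induction n with
      | zero => intro x hx; simp [hws] at hx
      | succ n ih =>
        intro x hx
        rw [hws_succ] at hx
        rcases List.mem_append.1 hx with h | h
        · exact ih x h
        · have : x = pick (ws n) n := by simpa using h
          rw [this]
          exact (hpick (ws n) n ih).1
    have hwA : ∀ n, w n ∈ A := fun n => (hpick _ _ (hwsA n)).1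
    have hwD : ∀ n, w n ∈ Dset (ws n) n := fun n => (hpick _ _ (hwsA n)).2
    have hw_mem_ws : ∀ i n, i < n → w i ∈ ws n := by
      intro i n h
      induction n with
      | zero => omega
      | succ n ih =>
        rw [hws_succ]
        rcases Nat.lt_succ_iff_lt_or_eq.1 h with h' | h'
        · exact List.mem_append_left _ (ih h')
        · subst h'
          exact List.mem_append_right _ (by simp [hw])
    have hwb : ∀ n, w n ∈ B b n := fun n => (hwD n).1.1
    have hwM : ∀ n, w n ∈ B M n := fun n => (hwD n).1.2
    have hwi : ∀ i j, i < j → w j ∈ B (w i) j := by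
      intro i j hij
      exact (hwD j).2 (w i) (hw_mem_ws i j hij)
    -- the compact saturated sets
    set K : ℕ → Set X := fun n => {y | ∃ j, n ≤ j ∧ specLE (w j) y} with hK
    have hKmem : ∀ n, w n ∈ K n := fun n => ⟨n, le_refl n, specLE_refl _⟩
    have hKsat : ∀ n, IsSaturatedSet (K n) := by
      rintro n x y ⟨j, hj, hx⟩ hxy
      exact ⟨j, hj, specLE_trans hx hxy⟩
    have hKcpt : ∀ n, IsCompact (K n) := by
      intro n
      apply isCompact_of_finite_subcover
      intro ι U hUopen hcover
      obtain ⟨i0, hi0⟩ := Set.mem_iUnion.1 (hcover (hKmem n))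
      obtain ⟨p, hp⟩ := hBbasis (w n) (U i0) (hUopen i0) hi0
      set N := max (p + 1) (n + 1) with hN
      have htail : ∀ j, N ≤ j → w j ∈ U i0 := by
        intro j hj
        have h1 : n < j :=
          lt_of_lt_of_le (Nat.lt_of_lt_of_le (Nat.lt_succ_self n) (le_max_right _ _)) hj
        have h2 : p ≤ j := le_trans (le_trans (Nat.le_succ p) (le_max_left _ _)) hj
        exact hp (hBanti (w n) p j h2 (hwi n j h1))
      have hsel : ∀ j : ℕ, ∃ i, n ≤ j → w j ∈ U i := by
        intro j
        by_cases hj : n ≤ j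
        · obtain ⟨i, hi⟩ := Set.mem_iUnion.1 (hcover ⟨j, hj, specLE_refl _⟩)
          exact ⟨i, fun _ => hi⟩
        · exact ⟨i0, fun h => absurd h hj⟩
      choose f hf using hsel
      refine ⟨insert i0 (Finset.image f (Finset.range N)), ?_⟩
      rintro y ⟨j, hnj, hjy⟩
      by_cases hjN : N ≤ j
      · refine Set.mem_biUnion (Finset.mem_insert_self _ _) ?_
        exact mem_open_of_specLE (hUopen i0) (htail j hjN) hjy
      · have hjR : j ∈ Finset.range N := Finset.mem_range.2 (by omega)
        refine Set.mem_biUnion (Finset.mem_insert_of_mem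
          (Finset.mem_image_of_mem f hjR)) ?_
        exact mem_open_of_specLE (hUopen (f j)) (hf j hnj) hjy
    have hKdir : ∀ m n, ∃ k, K k ⊆ K m ∩ K n := by
      intro m n
      refine ⟨max m n, ?_⟩
      rintro y ⟨j, hj, hy⟩
      exact ⟨⟨j, le_trans (le_max_left m n) hj, hy⟩,
        ⟨j, le_trans (le_max_right m n) hj, hy⟩⟩
    have hsub : (⋂ n, K n) ⊆ Aᶜ := by
      intro z hz
      simp only [Set.mem_iInter] at hz
      intro hzA
      have hbz : specLE b z := by
        by_contra hbz
        have hbopen : b ∈ (closure ({z} : Set X))ᶜ := hbz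
        obtain ⟨p, hp⟩ := hBbasis b _ isClosed_closure.isOpen_compl hbopen
        obtain ⟨j, hj, hjz⟩ := hz p
        exact (hp (hBanti b p j hj (hwb j))) hjz
      have hMz : specLE M z := by
        by_contra hMz
        have hMopen : M ∈ (closure ({z} : Set X))ᶜ := hMz
        obtain ⟨p, hp⟩ := hBbasis M _ isClosed_closure.isOpen_compl hMopen
        obtain ⟨j, hj, hjz⟩ := hz p
        exact (hp (hBanti M p j hj (hwM j))) hjz
      exact hbM ((hbmax z hzA hbz).symm.trans (hMmax z hzA hMz))
    obtain ⟨n, hn⟩ := hω K (fun n => ⟨⟨w n, hKmem n⟩, hKcpt n, hKsat n⟩) hKdir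
      Aᶜ hcl.isOpen_compl hsub
    exact (hn (hKmem n)) (hwA n)
  -- conclusion
  refine ⟨fun {S} hirr hcl => ?_⟩
  obtain ⟨a, ha⟩ := hirr.nonempty
  obtain ⟨m, hm, -, hmmax⟩ := hmax S hcl a ha
  refine ⟨m, subset_antisymm (closure_minimal (Set.singleton_subset_iff.2 hm) hcl) ?_⟩
  intro y hy
  obtain ⟨my, hmy, haym, hmymax⟩ := hmax S hcl y hy
  have heq : my = m := huniq S hirr hcl my hmy m hm hmymax hmmax
  rw [← heq]
  exact haym

end Auxiliary

/-- A first countable T0 space is sober iff it is well-filtered, iff it is an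
ω-well-filtered d-space. -/
theorem firstCountable_sober_iff_wellFiltered {X : Type*} [TopologicalSpace X] [T0Space X]
    [FirstCountableTopology X] :
    (QuasiSober X ↔ WellFiltered X) ∧
    (WellFiltered X ↔ (OmegaWellFiltered X ∧ DSpace X)) := by
  refine ⟨⟨fun hs => sober_to_wf hs, fun hwf => crux (wf_to_omega hwf) (wf_to_dspace hwf)⟩,
    ⟨fun hwf => ⟨wf_to_omega hwf, wf_to_dspace hwf⟩, fun h => sober_to_wf (crux h.1 h.2)⟩⟩
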